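/- Let C = x_0, x_1, …, x_{n−1}, x_0 be a cycle of length n with n ≠ 5, let a, b, c be three pairwise distinct colors, and let i, j be integers with 2 ≤ i < j ≤ n−2 such that j − i is even and j − i ≥ 2. Then there exists a 3-star edge coloring f of C using the colors {a, b, c} such that the two edges incident with x_i receive the colors a and b (i.e., {f(x_{i−1}x_i), f(x_ix_{i+1})} = {a, b}) and the two edges incident with x_j receive the colors b and c (i.e., {f(x_{j−1}x_j), f(x_jx_{j+1})} = {b, c}). -/

import Mathlib

open Finset

open Finset

private lemma sum_shift {n : ℕ} (g : ℕ → ℕ) (hg : ∀ t, g (t + n) = g t) :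
    ∀ cc, (∑ r ∈ range n, g (r + cc)) = ∑ r ∈ range n, g r := by
  intro cc
  induction cc with
  | zero => simp
  | succ d ih =>
    have h1 : (∑ r ∈ range (n+1), g (r + d))
        = (∑ r ∈ range n, g (r + 1 + d)) + g d := by
      rw [Finset.sum_range_succ' (fun r => g (r + d)) n]
      simp
    have h2 : (∑ r ∈ range (n+1), g (r + d))
        = (∑ r ∈ range n, g (r + d)) + g (n + d) := Finset.sum_range_succ _ n
    have h3 : g (n + d) = g d := by rw [Nat.add_comm n d]; exact hg d
    have h4 : (∑ r ∈ range n, g (r + (d+1))) = ∑ r ∈ range n, g (r + 1 + d) := by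
      apply Finset.sum_congr rfl; intro x _; congr 1; omega
    omega

private lemma exists_pq (n m : ℕ) (hm2 : 2 ≤ m) (hme : m % 2 = 0) (hmn : m + 4 ≤ n) :
    ∃ p q : ℕ,
      (q = 0 ∨ 2 ≤ q) ∧ p + q ≤ n ∧ q + 2 ≤ n ∧ (n + q) % 3 = 0 ∧
      ((q = 0 ∧ p = 0 ∧ m % 3 = 1) ∨
       (2 ≤ p ∧ p ≤ m ∧ m < p + q ∧ (p + 2 * (m - p)) % 3 = 2)) := by
  have h1 : n % 3 = 0 ∨ n % 3 = 1 ∨ n % 3 = 2 := by omega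
  have h2 : m % 3 = 0 ∨ m % 3 = 1 ∨ m % 3 = 2 := by omega
  rcases h1 with h1 | h1 | h1 <;> rcases h2 with h2 | h2 | h2
  · exact ⟨m - 2, 3, by omega, by omega, by omega, by omega, by right; omega⟩
  · exact ⟨0, 0, by omega, by omega, by omega, by omega, by left; omega⟩
  · exact ⟨m, 3, by omega, by omega, by omega, by omega, by right; omega⟩
  · exact ⟨m - 2, 5, by omega, by omega, by omega, by omega, by right; omega⟩
  · exact ⟨m - 1, 2, by omega, by omega, by omega, by omega, by right; omega⟩
  · exact ⟨m, 2, by omega, by omega, by omega, by omega, by right; omega⟩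
  · exact ⟨m - 2, 4, by omega, by omega, by omega, by omega, by right; omega⟩
  · exact ⟨m - 1, 4, by omega, by omega, by omega, by omega, by right; omega⟩
  · exact ⟨m, 4, by omega, by omega, by omega, by omega, by right; omega⟩
open Finset

private def uu (p q k : ℕ) : ℕ := if p ≤ k ∧ k < p + q then 2 else 1

private lemma uu_val (p q k : ℕ) : uu p q k = 1 ∨ uu p q k = 2 := by
  unfold uu; split_ifs <;> simp

private lemma uu_run (p q n : ℕ) (hq : q = 0 ∨ 2 ≤ q) (hpq : p + q ≤ n) (hqn : q + 2 ≤ n)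
    (hp : (q = 0 ∧ p = 0) ∨ 2 ≤ p) (x : ℕ) (hx : x < n) :
    uu p q x = uu p q ((x+1) % n) ∨ uu p q ((x+1) % n) = uu p q ((x+2) % n) := by
  have hn2 : 2 ≤ n := by omega
  have e1 : (x+1) % n = if x+1 = n then 0 else x+1 := by
    split_ifs with h
    · rw [h, Nat.mod_self]
    · exact Nat.mod_eq_of_lt (by omega)
  have e2 : (x+2) % n = if x+2 = n then 0 else if x+1 = n then 1 else x+2 := by
    split_ifs with h h'
    · rw [h, Nat.mod_self]
    · have : x + 2 = n + 1 := by omega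
      rw [this, Nat.add_mod_left, Nat.mod_eq_of_lt (by omega)]
    · exact Nat.mod_eq_of_lt (by omega)
  rw [e1, e2]
  split_ifs with h h' <;> unfold uu <;> split_ifs <;> omega

private lemma uu_sum_full (p q n : ℕ) (hpq : p + q ≤ n) :
    (∑ r ∈ range n, uu p q r) = n + q := by
  have h1 : (∑ r ∈ range n, uu p q r) =
      (∑ r ∈ Finset.Ico 0 p, uu p q r) + ((∑ r ∈ Finset.Ico p (p+q), uu p q r)
        + ∑ r ∈ Finset.Ico (p+q) n, uu p q r) := by
    rw [Finset.range_eq_Ico, ← Finset.sum_Ico_consecutive _ (Nat.zero_le p) (by omega : p ≤ n),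
      ← Finset.sum_Ico_consecutive _ (by omega : p ≤ p + q) hpq]
  have h2 : (∑ r ∈ Finset.Ico 0 p, uu p q r) = (Finset.Ico 0 p).card * 1 :=
    Finset.sum_const_nat (fun x hx => by
      simp only [Finset.mem_Ico] at hx; unfold uu; rw [if_neg (by omega)])
  have h3 : (∑ r ∈ Finset.Ico p (p+q), uu p q r) = (Finset.Ico p (p+q)).card * 2 :=
    Finset.sum_const_nat (fun x hx => by
      simp only [Finset.mem_Ico] at hx; unfold uu; rw [if_pos (by omega)])
  have h4 : (∑ r ∈ Finset.Ico (p+q) n, uu p q r) = (Finset.Ico (p+q) n).card * 1 :=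
    Finset.sum_const_nat (fun x hx => by
      simp only [Finset.mem_Ico] at hx; unfold uu; rw [if_neg (by omega)])
  rw [Nat.card_Ico] at h2 h3 h4
  omega

private lemma uu_sum_mid (p q m : ℕ) (hpm : p ≤ m) (hmq : m ≤ p + q) :
    (∑ r ∈ range m, uu p q r) = p + 2 * (m - p) := by
  have h1 : (∑ r ∈ range m, uu p q r) =
      (∑ r ∈ Finset.Ico 0 p, uu p q r) + (∑ r ∈ Finset.Ico p m, uu p q r) := by
    rw [Finset.range_eq_Ico, ← Finset.sum_Ico_consecutive _ (Nat.zero_le p) hpm]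
  have h2 : (∑ r ∈ Finset.Ico 0 p, uu p q r) = (Finset.Ico 0 p).card * 1 :=
    Finset.sum_const_nat (fun x hx => by
      simp only [Finset.mem_Ico] at hx; unfold uu; rw [if_neg (by omega)])
  have h3 : (∑ r ∈ Finset.Ico p m, uu p q r) = (Finset.Ico p m).card * 2 :=
    Finset.sum_const_nat (fun x hx => by
      simp only [Finset.mem_Ico] at hx; unfold uu; rw [if_pos (by omega)])
  rw [Nat.card_Ico] at h2 h3
  omega

private lemma uu_sum_const (p q m : ℕ) (hq : q = 0) :
    (∑ r ∈ range m, uu p q r) = m := by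
  have h2 : (∑ r ∈ range m, uu p q r) = (range m).card * 1 :=
    Finset.sum_const_nat (fun x hx => by unfold uu; rw [if_neg (by omega)])
  rw [Finset.card_range] at h2
  omega

private lemma exists_G (n m i₁ : ℕ) (hm2 : 2 ≤ m) (hme : m % 2 = 0)
    (hmn : m + 4 ≤ n) (hi₁ : i₁ + m + 1 < n) :
    ∃ G : ℕ → ZMod 3, (∀ t, G (t + n) = G t) ∧ (∀ t, G t ≠ G (t + 1)) ∧
      (∀ t, ¬(G t = G (t + 2) ∧ G (t + 1) = G (t + 3))) ∧
      G i₁ = 0 ∧ G (i₁ + 1) = 1 ∧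
      ((G (i₁ + m) = 1 ∧ G (i₁ + m + 1) = 2) ∨ (G (i₁ + m) = 2 ∧ G (i₁ + m + 1) = 1)) := by
  obtain ⟨p, q, hq, hpq, hqn, hnq3, hC⟩ := exists_pq n m hm2 hme hmn
  have hn2 : 2 ≤ n := by omega
  have hi₁n : i₁ ≤ n := by omega
  have hp : (q = 0 ∧ p = 0) ∨ 2 ≤ p := by rcases hC with h | h <;> omega
  -- the move sequence
  set s : ℕ → ℕ := fun t => uu p q ((t + (n - i₁)) % n) with hs
  have s_per : ∀ t, s (t + n) = s t := by
    intro t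
    simp only [hs]
    congr 1
    have : t + n + (n - i₁) = (t + (n - i₁)) + n := by omega
    rw [this, Nat.add_mod_right]
  have s_val : ∀ t, s t = 1 ∨ s t = 2 := fun t => uu_val _ _ _
  have s_at : ∀ k, k < n → s (i₁ + k) = uu p q k := by
    intro k hk
    simp only [hs]
    have : i₁ + k + (n - i₁) = k + n := by omega
    rw [this, Nat.add_mod_right, Nat.mod_eq_of_lt hk]
  have addmod : ∀ a k : ℕ, k < n → (a + k) % n = (a % n + k) % n := by
    intro a k hk
    rw [Nat.add_mod, Nat.mod_eq_of_lt hk]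
  have s_run : ∀ t, s t = s (t + 1) ∨ s (t + 1) = s (t + 2) := by
    intro t
    simp only [hs]
    have e1 : (t + 1 + (n - i₁)) % n = ((t + (n - i₁)) % n + 1) % n := by
      rw [show t + 1 + (n - i₁) = (t + (n - i₁)) + 1 by omega, addmod _ 1 (by omega)]
    have e2 : (t + 2 + (n - i₁)) % n = ((t + (n - i₁)) % n + 2) % n := by
      rw [show t + 2 + (n - i₁) = (t + (n - i₁)) + 2 by omega, addmod _ 2 (by omega)]
    rw [e1, e2]
    exact uu_run p q n hq hpq hqn hp _ (Nat.mod_lt _ (by omega))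
  -- partial sums
  set S : ℕ → ZMod 3 := fun t => ((∑ r ∈ range t, s r : ℕ) : ZMod 3) with hS
  set G : ℕ → ZMod 3 := fun t => S t - S i₁ with hG
  have G_step : ∀ t, G (t + 1) = G t + (s t : ZMod 3) := by
    intro t
    simp only [hG, hS, Finset.sum_range_succ, Nat.cast_add]
    ring
  have G_window : ∀ k, G (i₁ + k) = ((∑ r ∈ range k, s (i₁ + r) : ℕ) : ZMod 3) := by
    intro k
    simp only [hG, hS, Finset.sum_range_add, Nat.cast_add]
    ring
  have G_per : ∀ t, G (t + n) = G t := by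
    intro t
    have h1 : (∑ r ∈ range (t + n), s r) = (∑ r ∈ range t, s r) + ∑ r ∈ range n, s (t + r) :=
      Finset.sum_range_add s t n
    have h2 : (∑ r ∈ range n, s (t + r)) = ∑ r ∈ range n, s r := by
      rw [Finset.sum_congr rfl (g := fun r => s (r + t)) (fun x _ => by rw [Nat.add_comm])]
      exact sum_shift s s_per t
    have h3 : (∑ r ∈ range n, s r) = ∑ r ∈ range n, (fun r => uu p q (r % n)) (r + (n - i₁)) := rfl
    have h4 : (∑ r ∈ range n, (fun r => uu p q (r % n)) (r + (n - i₁)))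
        = ∑ r ∈ range n, uu p q (r % n) := by
      exact sum_shift (fun r => uu p q (r % n))
        (fun t' => by simp only [Nat.add_mod_right]) (n - i₁)
    have h5 : (∑ r ∈ range n, uu p q (r % n)) = ∑ r ∈ range n, uu p q r := by
      apply Finset.sum_congr rfl
      intro x hx
      rw [Nat.mod_eq_of_lt (Finset.mem_range.mp hx)]
    have h6 : (∑ r ∈ range n, s r) = n + q := by rw [h3, h4, h5, uu_sum_full p q n hpq]
    have h7 : ((∑ r ∈ range n, s (t + r) : ℕ) : ZMod 3) = 0 := by
      rw [h2, h6, ← ZMod.natCast_mod, hnq3, Nat.cast_zero]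
    simp only [hG, hS, h1, Nat.cast_add, h7]
    ring
  -- endpoint values
  have Gi₁ : G i₁ = 0 := by simp [hG]
  have window_uu : ∀ k, k ≤ m + 1 → G (i₁ + k) = ((∑ r ∈ range k, uu p q r : ℕ) : ZMod 3) := by
    intro k hk
    rw [G_window k]
    congr 1
    apply Finset.sum_congr rfl
    intro x hx
    exact s_at x (by simp only [Finset.mem_range] at hx; omega)
  have Gi₁1 : G (i₁ + 1) = 1 := by
    rw [window_uu 1 (by omega)]
    have : (∑ r ∈ range 1, uu p q r) = 1 := by
      rw [Finset.sum_range_one]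
      unfold uu
      rw [if_neg (by omega)]
    rw [this, Nat.cast_one]
  have Gend : (G (i₁ + m) = 1 ∧ G (i₁ + m + 1) = 2) ∨ (G (i₁ + m) = 2 ∧ G (i₁ + m + 1) = 1) := by
    have hw1 : G (i₁ + m) = ((∑ r ∈ range m, uu p q r : ℕ) : ZMod 3) := window_uu m (by omega)
    have hw2 : G (i₁ + m + 1) = ((∑ r ∈ range (m+1), uu p q r : ℕ) : ZMod 3) := by
      rw [show i₁ + m + 1 = i₁ + (m + 1) by omega]; exact window_uu (m+1) (by omega)
    rw [Finset.sum_range_succ] at hw2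
    rcases hC with ⟨h0, hp0, hm3⟩ | ⟨hp2, hpm, hmq, hsum⟩
    · left
      constructor
      · rw [hw1, uu_sum_const p q m h0, ← ZMod.natCast_mod, hm3]; rfl
      · have hu : uu p q m = 1 := by unfold uu; rw [if_neg (by omega)]
        rw [hw2, uu_sum_const p q m h0, hu, Nat.cast_add, ← ZMod.natCast_mod m, hm3]
        rfl
    · right
      constructor
      · rw [hw1, uu_sum_mid p q m hpm (by omega), ← ZMod.natCast_mod, hsum]; rfl
      · have hu : uu p q m = 2 := by unfold uu; rw [if_pos (by omega)]
        rw [hw2, uu_sum_mid p q m hpm (by omega), hu, Nat.cast_add,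
          ← ZMod.natCast_mod (p + 2 * (m - p)), hsum]
        rfl
  -- proper and star
  have G_proper : ∀ t, G t ≠ G (t + 1) := by
    intro t h
    rw [G_step t] at h
    have hc : ((s t : ℕ) : ZMod 3) = 0 := by linear_combination -h
    rcases s_val t with hv | hv <;> rw [hv] at hc <;> revert hc <;> decide
  have cast_ne : ∀ x y : ℕ, (x = 1 ∨ x = 2) → (y = 1 ∨ y = 2) →
      (x : ZMod 3) + (y : ZMod 3) = 0 → x ≠ y := by
    intro x y hx hy hsum he
    subst he
    rcases hx with h | h <;> subst h <;> revert hsum <;> decide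
  have G_star : ∀ t, ¬(G t = G (t + 2) ∧ G (t + 1) = G (t + 3)) := by
    intro t ⟨h1, h2⟩
    have e2 : G (t + 2) = G t + (s t : ZMod 3) + (s (t+1) : ZMod 3) := by
      rw [show t + 2 = (t + 1) + 1 by omega, G_step, G_step]
    have e3 : G (t + 3) = G (t + 1) + (s (t+1) : ZMod 3) + (s (t+2) : ZMod 3) := by
      rw [show t + 3 = (t + 1 + 1) + 1 by omega, G_step, G_step]
    rw [e2] at h1
    rw [e3] at h2
    have c1 : (s t : ZMod 3) + (s (t+1) : ZMod 3) = 0 := by linear_combination -h1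
    have c2 : (s (t+1) : ZMod 3) + (s (t+2) : ZMod 3) = 0 := by linear_combination -h2
    have d1 : s t ≠ s (t + 1) := cast_ne _ _ (s_val t) (s_val (t+1)) c1
    have d2 : s (t + 1) ≠ s (t + 2) := cast_ne _ _ (s_val (t+1)) (s_val (t+2)) c2
    rcases s_run t with h | h
    · exact d1 h
    · exact d2 h
  exact ⟨G, G_per, G_proper, G_star, Gi₁, Gi₁1, Gend⟩

/-- A 3-star edge coloring of the cycle `x_0, x_1, …, x_{n-1}, x_0`, where the edge
`x_i x_{i+1}` (indices mod `n`) receives color `g i`: the coloring is proper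
(adjacent edges get distinct colors) and no path or cycle with four edges is bicolored
(for a proper coloring this means no four consecutive edges are colored `a b a b`). -/
def IsStarEdgeColoringCycle {α : Type*} (n : ℕ) (g : ZMod n → α) : Prop :=
  (∀ i, g i ≠ g (i + 1)) ∧ ∀ i, ¬ (g i = g (i + 2) ∧ g (i + 1) = g (i + 3))
theorem stmt_6 {α : Type*} (n : ℕ) (hn5 : n ≠ 5)
    (a b c : α) (hab : a ≠ b) (hac : a ≠ c) (hbc : b ≠ c)
    (i j : ℕ) (hi : 2 ≤ i) (hij : i < j) (hj : j ≤ n - 2)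
    (heven : Even (j - i)) (hge : 2 ≤ j - i) :
    ∃ g : ZMod n → α, (∀ r, g r ∈ ({a, b, c} : Set α)) ∧
      IsStarEdgeColoringCycle n g ∧
      ({g ((i : ZMod n) - 1), g (i : ZMod n)} : Set α) = {a, b} ∧
      ({g ((j : ZMod n) - 1), g (j : ZMod n)} : Set α) = {b, c} := by
  have hn6 : 6 ≤ n := by omega
  haveI : NeZero n := ⟨by omega⟩
  set m := j - i with hm
  set i₁ := i - 1 with hi₁def
  have hme : m % 2 = 0 := Nat.even_iff.mp heven
  have hmn : m + 4 ≤ n := by omega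
  have hi₁lt : i₁ + m + 1 < n := by omega
  obtain ⟨G, Gper, Gprop, Gstar, hGi, hGi1, hGend⟩ := exists_G n m i₁ hge hme hmn hi₁lt
  set e : ZMod 3 → α := fun x => if x = 0 then a else if x = 1 then b else c with he
  have he0 : e 0 = a := by simp [he]
  have he1 : e 1 = b := by simp only [he]; rw [if_neg (by decide)]; simp
  have he2 : e 2 = c := by simp only [he]; rw [if_neg (by decide), if_neg (by decide)]
  have einj : Function.Injective e := by
    intro x y h
    have hx : ∀ z : ZMod 3, z = 0 ∨ z = 1 ∨ z = 2 := by decide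
    rcases hx x with rfl | rfl | rfl <;> rcases hx y with rfl | rfl | rfl <;>
      simp only [he0, he1, he2] at h <;> simp_all
  have Gmul : ∀ k t, G (t + n * k) = G t := by
    intro k
    induction k with
    | zero => simp
    | succ d ih =>
      intro t
      rw [show t + n * (d + 1) = (t + n * d) + n by ring, Gper, ih]
  have Gmod : ∀ t, G (t % n) = G t := by
    intro t
    conv_rhs => rw [← Nat.mod_add_div t n]
    rw [Gmul]
  set g : ZMod n → α := fun r => e (G r.val) with hg
  have gcast : ∀ t : ℕ, g ((t : ℕ) : ZMod n) = e (G t) := by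
    intro t
    simp only [hg, ZMod.val_natCast, Gmod]
  have hcast1 : ∀ t : ℕ, ((t : ℕ) : ZMod n) + 1 = ((t + 1 : ℕ) : ZMod n) := by
    intro t; push_cast; ring
  have hcast2 : ∀ t : ℕ, ((t : ℕ) : ZMod n) + 2 = ((t + 2 : ℕ) : ZMod n) := by
    intro t; push_cast; ring
  have hcast3 : ∀ t : ℕ, ((t : ℕ) : ZMod n) + 3 = ((t + 3 : ℕ) : ZMod n) := by
    intro t; push_cast; ring
  refine ⟨g, ?_, ⟨?_, ?_⟩, ?_, ?_⟩
  · intro r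
    simp only [hg, he]
    split_ifs <;> simp
  · intro r
    have hr : r = ((r.val : ℕ) : ZMod n) := (ZMod.natCast_rightInverse r).symm
    rw [hr, hcast1, gcast, gcast]
    intro h
    exact Gprop r.val (einj h)
  · intro r ⟨h1, h2⟩
    have hr : r = ((r.val : ℕ) : ZMod n) := (ZMod.natCast_rightInverse r).symm
    rw [hr, hcast2, gcast, gcast] at h1
    rw [hr, hcast1, hcast3, gcast, gcast] at h2
    exact Gstar r.val ⟨einj h1, einj h2⟩
  · have e1 : (i : ZMod n) - 1 = ((i₁ : ℕ) : ZMod n) := by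
      rw [hi₁def, Nat.cast_sub (by omega : 1 ≤ i), Nat.cast_one]
    have e2 : ((i : ℕ) : ZMod n) = ((i₁ + 1 : ℕ) : ZMod n) := by
      congr 1; omega
    rw [e1, e2, gcast, gcast, hGi, hGi1, he0, he1]
  · have e1 : (j : ZMod n) - 1 = ((i₁ + m : ℕ) : ZMod n) := by
      rw [show (i₁ + m : ℕ) = j - 1 by omega, Nat.cast_sub (by omega : 1 ≤ j), Nat.cast_one]
    have e2 : ((j : ℕ) : ZMod n) = ((i₁ + m + 1 : ℕ) : ZMod n) := by
      congr 1; omega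
    rw [e1, e2, gcast, gcast]
    rcases hGend with ⟨ha1, ha2⟩ | ⟨ha1, ha2⟩
    · rw [ha1, ha2, he1, he2]
    · rw [ha1, ha2, he2, he1]
      exact Set.pair_comm c b
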